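/- Let p ≥ 3 be a prime and let i be an integer with 1 ≤ i ≤ p-1. Then ∑_{m=p+1}^{i+p} (-1)^{m-1} (m-1)! · S(i+p, m)_{≤ p-1} ≡ p (mod p^2) if i = 1, and ≡ 0 (mod p^2) if i ≥ 2. -/

import Mathlib

/-- `r`-restricted Stirling number of the second kind: number of partitions of an
`n`-set into `k` nonempty blocks, each of size at most `r`. -/
noncomputable def stirlingRes (n k r : ℕ) : ℕ :=
  Nat.card {P : Finpartition (Finset.univ : Finset (Fin n)) //
    P.parts.card = k ∧ ∀ b ∈ P.parts, b.card ≤ r}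


open Finset

def stirling' : ℕ → ℕ → ℕ
  | 0, 0 => 1
  | 0, _ + 1 => 0
  | _ + 1, 0 => 0
  | n + 1, k + 1 => stirling' n k + (k + 1) * stirling' n (k + 1)

@[simp] lemma stirling'_zero_zero : stirling' 0 0 = 1 := rfl
@[simp] lemma stirling'_zero_succ (k : ℕ) : stirling' 0 (k+1) = 0 := rfl
@[simp] lemma stirling'_succ_zero (n : ℕ) : stirling' (n+1) 0 = 0 := rfl
lemma stirling'_succ_succ (n k : ℕ) :
    stirling' (n+1) (k+1) = stirling' n k + (k + 1) * stirling' n (k + 1) := rfl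

lemma stirling'_eq_zero_of_lt : ∀ {n k : ℕ}, n < k → stirling' n k = 0 := by
  intro n
  induction n with
  | zero => intro k hk; match k, hk with | k+1, _ => rfl
  | succ n ih =>
    intro k hk
    match k, hk with
    | k+1, hk => rw [stirling'_succ_succ, ih (by omega), ih (by omega)]; ring

lemma stirling'_self (n : ℕ) : stirling' n n = 1 := by
  induction n with
  | zero => rfl
  | succ n ih =>
    rw [stirling'_succ_succ, ih, stirling'_eq_zero_of_lt (Nat.lt_succ_self n)]; ring

lemma stirling'_one (n : ℕ) : stirling' (n+1) 1 = 1 := by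
  induction n with
  | zero => rfl
  | succ n ih => rw [stirling'_succ_succ, ih]; simp


lemma pascal_sum_step (n k : ℕ) :
    (∑ t ∈ range (k+2), (-1:ℤ)^t * (k.choose t) * ((k + 1 - t : ℕ) : ℤ)^n)
    = (∑ t ∈ range (k+2), (-1:ℤ)^t * ((k+1).choose t) * ((k + 1 - t : ℕ) : ℤ)^n)
      + ∑ s ∈ range (k+1), (-1:ℤ)^s * (k.choose s) * ((k - s : ℕ) : ℤ)^n := by
  have pascal : ∀ t ∈ range (k+2), (-1:ℤ)^t * ((k+1).choose t) * ((k + 1 - t : ℕ) : ℤ)^n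
      = (-1:ℤ)^t * (k.choose t) * ((k + 1 - t : ℕ) : ℤ)^n
        + (-1:ℤ)^t * (if t = 0 then 0 else ((k.choose (t-1) : ℤ))) * ((k + 1 - t : ℕ) : ℤ)^n := by
    intro t _
    cases t with
    | zero => simp
    | succ s =>
      rw [Nat.choose_succ_succ']
      simp only [Nat.add_sub_cancel, if_neg (Nat.succ_ne_zero s)]
      push_cast
      ring
  rw [Finset.sum_congr rfl pascal, Finset.sum_add_distrib]
  have hextra : ∑ t ∈ range (k+2),
        (-1:ℤ)^t * (if t = 0 then 0 else ((k.choose (t-1) : ℤ))) * ((k + 1 - t : ℕ) : ℤ)^n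
      = - ∑ s ∈ range (k+1), (-1:ℤ)^s * (k.choose s) * ((k - s : ℕ) : ℤ)^n := by
    rw [Finset.sum_range_succ' (fun t =>
      (-1:ℤ)^t * (if t = 0 then 0 else ((k.choose (t-1) : ℤ))) * ((k + 1 - t : ℕ) : ℤ)^n) (k+1)]
    simp only [Nat.succ_ne_zero, if_neg, if_pos, Nat.add_sub_cancel, pow_succ, mul_zero,
      zero_mul, mul_one, add_zero, reduceIte]
    rw [← Finset.sum_neg_distrib]
    apply Finset.sum_congr rfl
    intro s _
    have hsub : (k + 1 - (s+1) : ℕ) = k - s := by omega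
    rw [hsub]
    ring
  rw [hextra]
  ring

/-- The surjection formula. -/
lemma factorial_mul_stirling' (n : ℕ) : ∀ k : ℕ, (k.factorial : ℤ) * stirling' n k
    = ∑ t ∈ range (k+1), (-1 : ℤ)^t * (k.choose t) * ((k - t : ℕ) : ℤ)^n := by
  induction n with
  | zero =>
    intro k
    have h : ∀ t ∈ range (k+1), (-1 : ℤ)^t * (k.choose t) * ((k - t : ℕ) : ℤ)^0
        = (-1 : ℤ)^t * (k.choose t) := by intro t _; rw [pow_zero, mul_one]
    rw [Finset.sum_congr rfl h, Int.alternating_sum_range_choose]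
    cases k <;> simp
  | succ n ih =>
    intro k
    cases k with
    | zero => simp
    | succ k =>
      -- RHS transformation
      have step1 : ∀ t ∈ range (k+2), (-1 : ℤ)^t * ((k+1).choose t) * ((k + 1 - t : ℕ) : ℤ)^(n+1)
          = (k + 1 : ℤ) * ((-1 : ℤ)^t * (k.choose t) * ((k + 1 - t : ℕ) : ℤ)^n) := by
        intro t _
        have hchoose : (k+1).choose t * (k + 1 - t) = (k+1) * k.choose t := by
          rw [← Nat.choose_succ_right_eq, ← Nat.add_one_mul_choose_eq]
        have : ((k + 1 - t : ℕ) : ℤ)^(n+1) = ((k + 1 - t : ℕ) : ℤ)^n * ((k + 1 - t : ℕ) : ℤ) := by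
          ring
        rw [this]
        have : ((-1 : ℤ)^t * ((k+1).choose t)) * (((k + 1 - t : ℕ) : ℤ)^n * ((k + 1 - t : ℕ) : ℤ))
            = (-1 : ℤ)^t * ((((k+1).choose t : ℤ) * ((k + 1 - t : ℕ) : ℤ))
              * ((k + 1 - t : ℕ) : ℤ)^n) := by ring
        rw [this, show (((k+1).choose t : ℤ) * ((k + 1 - t : ℕ) : ℤ))
            = (((k+1).choose t * (k + 1 - t) : ℕ) : ℤ) by push_cast; ring, hchoose]
        push_cast
        ring
      rw [Finset.sum_congr rfl step1, ← Finset.mul_sum]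
      rw [pascal_sum_step n k, ← ih (k+1), ← ih k]
      rw [stirling'_succ_succ]
      push_cast [Nat.factorial_succ]
      ring

lemma stirling'_prime_mid {p : ℕ} (hp : p.Prime) {m : ℕ} (h1 : 1 < m) (h2 : m < p) :
    (stirling' p m : ZMod p) = 0 := by
  haveI : Fact p.Prime := ⟨hp⟩
  have key := factorial_mul_stirling' p m
  have key1 := factorial_mul_stirling' 1 m
  have hcast : ((m.factorial : ℤ) : ZMod p) * ((stirling' p m : ℤ) : ZMod p)
      = ∑ t ∈ range (m+1), ((-1 : ZMod p))^t * (m.choose t) * ((m - t : ℕ) : ZMod p)^p := by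
    have := congrArg (fun z : ℤ => (z : ZMod p)) key
    push_cast at this ⊢
    convert this using 2 <;> push_cast <;> ring_nf
  have hcast1 : ((m.factorial : ℤ) : ZMod p) * ((stirling' 1 m : ℤ) : ZMod p)
      = ∑ t ∈ range (m+1), ((-1 : ZMod p))^t * (m.choose t) * ((m - t : ℕ) : ZMod p)^1 := by
    have := congrArg (fun z : ℤ => (z : ZMod p)) key1
    push_cast at this ⊢
    convert this using 2 <;> push_cast <;> ring_nf
  have h3 : ∑ t ∈ range (m+1), ((-1 : ZMod p))^t * (m.choose t) * ((m - t : ℕ) : ZMod p)^p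
      = ∑ t ∈ range (m+1), ((-1 : ZMod p))^t * (m.choose t) * ((m - t : ℕ) : ZMod p)^1 :=
    Finset.sum_congr rfl fun t _ => by rw [ZMod.pow_card, pow_one]
  have h1m : stirling' 1 m = 0 := by
    match m, h1 with
    | m'+2, _ =>
      show stirling' 0 (m'+1) + (m'+2) * stirling' 0 (m'+2) = 0
      simp
  rw [h3, ← hcast1, h1m] at hcast
  have hfac : ((m.factorial : ℤ) : ZMod p) ≠ 0 := by
    push_cast
    rw [Ne, ZMod.natCast_eq_zero_iff]
    rw [hp.dvd_factorial]
    omega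
  have := mul_left_cancel₀ hfac hcast
  push_cast at this
  simpa using this

lemma stirling'_shift {p : ℕ} (hp : p.Prime) (hp2 : 2 ≤ p) :
    ∀ n m : ℕ, (stirling' (n + p) m : ZMod p)
      = (stirling' (n + 1) m : ZMod p)
        + if p ≤ m then (stirling' n (m - p) : ZMod p) else 0 := by
  intro n
  induction n with
  | zero =>
    intro m
    simp only [zero_add]
    rcases Nat.lt_trichotomy m p with hlt | rfl | hgt
    · rw [if_neg (by omega)]
      match m, hlt with
      | 0, _ =>
        obtain ⟨q, rfl⟩ : ∃ q, p = q + 1 := ⟨p - 1, by omega⟩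
        simp
      | 1, _ =>
        obtain ⟨q, rfl⟩ : ∃ q, p = q + 1 := ⟨p - 1, by omega⟩
        rw [stirling'_one q, stirling'_one 0]
        norm_num
      | m + 2, hlt =>
        rw [stirling'_prime_mid hp (by omega) (by omega)]
        have h12 : stirling' 1 (m + 2) = 0 := by
          show stirling' 0 (m+1) + (m+2) * stirling' 0 (m+2) = 0
          simp
        rw [h12]
        simp
    · rw [if_pos le_rfl, Nat.sub_self, stirling'_self,
        stirling'_eq_zero_of_lt (by omega)]
      simp
    · rw [if_pos (by omega), stirling'_eq_zero_of_lt hgt,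
        stirling'_eq_zero_of_lt (by omega : 1 < m)]
      have h0 : stirling' 0 (m - p) = 0 := by
        obtain ⟨q, hq⟩ : ∃ q, m - p = q + 1 := ⟨m - p - 1, by omega⟩
        rw [hq]; rfl
      rw [h0]
      simp
  | succ n ih =>
    intro m
    cases m with
    | zero =>
      rw [if_neg (by omega)]
      rw [show n + 1 + p = (n + p) + 1 from by omega]
      simp
    | succ m' =>
      rw [show n + 1 + p = (n + p) + 1 from by omega, stirling'_succ_succ,
        stirling'_succ_succ]
      push_cast
      rw [ih m', ih (m' + 1)]
      rcases Nat.lt_trichotomy (m' + 1) p with hlt | heq | hgt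
      · rw [if_neg (by omega), if_neg (by omega), if_neg (by omega)]
        push_cast
        ring
      · subst heq
        rw [if_neg (by omega), if_pos le_rfl, if_pos le_rfl, Nat.sub_self]
        have hz : stirling' (n + 1) 0 = 0 := by simp
        rw [hz]
        have hm : ((m' : ZMod (m' + 1)) + 1) = 0 := by
          have h := ZMod.natCast_self (m' + 1)
          push_cast at h
          linear_combination h
        push_cast
        rw [hm]
        ring
      · rw [if_pos (by omega), if_pos (by omega), if_pos (by omega)]
        have h1 : m' + 1 - p = (m' - p) + 1 := by omega
        rw [h1, stirling'_succ_succ n (m' - p)]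
        have hm : ((m' : ZMod p) + 1) = ((m' - p : ℕ) : ZMod p) + 1 := by
          have h2 : m' = (m' - p) + p := by omega
          rw [h2]
          push_cast
          simp [ZMod.natCast_self]
        push_cast
        rw [hm]
        ring

lemma sum_Icc_one {M : Type*} [AddCommMonoid M] (n : ℕ) (f : ℕ → M) :
    ∑ m ∈ Icc 1 n, f m = ∑ j ∈ range n, f (j + 1) := by
  induction n with
  | zero => simp
  | succ n ih =>
    rw [Finset.sum_Icc_succ_top (by omega), ih, Finset.sum_range_succ]

lemma key_identity : ∀ n : ℕ, 1 ≤ n →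
    (∑ m ∈ Icc 1 n, (-1 : ℤ)^(m-1) * ((m-1).factorial : ℤ) * stirling' n m)
      = if n = 1 then 1 else 0 := by
  intro n hn
  match n, hn with
  | 1, _ => rw [show Icc 1 1 = {1} from rfl]; simp [stirling'_one 0]
  | n + 2, _ =>
    rw [if_neg (by omega), sum_Icc_one]
    have hterm : ∀ j ∈ range (n + 2),
        (-1 : ℤ)^(j+1-1) * ((j+1-1).factorial : ℤ) * stirling' (n+2) (j+1)
          = ((-1 : ℤ)^j * (j.factorial : ℤ) * stirling' (n+1) j)
            - ((-1 : ℤ)^(j+1) * ((j+1).factorial : ℤ) * stirling' (n+1) (j+1)) := by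
      intro j _
      rw [Nat.add_sub_cancel, stirling'_succ_succ]
      push_cast [Nat.factorial_succ]
      ring
    rw [Finset.sum_congr rfl hterm, Finset.sum_sub_distrib]
    have h1 : ∑ j ∈ range (n + 2), (-1 : ℤ)^(j+1) * ((j+1).factorial : ℤ) * stirling' (n+1) (j+1)
        = ∑ j ∈ range (n + 3), (-1 : ℤ)^j * (j.factorial : ℤ) * stirling' (n+1) j
          - (-1 : ℤ)^0 * ((0).factorial : ℤ) * stirling' (n+1) 0 := by
      rw [Finset.sum_range_succ' (fun j => (-1 : ℤ)^j * (j.factorial : ℤ) * stirling' (n+1) j)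
        (n+2)]
      ring
    rw [h1]
    have h2 : ∑ j ∈ range (n + 3), (-1 : ℤ)^j * (j.factorial : ℤ) * stirling' (n+1) j
        = ∑ j ∈ range (n + 2), (-1 : ℤ)^j * (j.factorial : ℤ) * stirling' (n+1) j := by
      rw [Finset.sum_range_succ]
      rw [stirling'_eq_zero_of_lt (by omega)]
      simp
    rw [h2]
    simp


open Finset Function

-- card of surjections is invariant under equivs of domain and codomain
lemma card_surj_congr {α α' γ γ' : Type*} (e : α ≃ α') (g : γ ≃ γ') :
    Nat.card {f : α → γ // Surjective f} = Nat.card {f : α' → γ' // Surjective f} := by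
  apply Nat.card_congr
  refine ((Equiv.arrowCongr e g).subtypeEquiv ?_)
  intro f
  constructor
  · intro hf
    exact (g.surjective.comp hf).comp e.symm.surjective
  · intro hf
    have : Surjective (g.symm ∘ (Equiv.arrowCongr e g f) ∘ e) :=
      (g.symm.surjective.comp hf).comp e.surjective
    convert this using 1
    ext x
    simp [Equiv.arrowCongr]

lemma card_surj_option {β γ : Type*} [Fintype β] [Fintype γ] [DecidableEq γ] :
    Nat.card {f : Option β → γ // Surjective f}
      = Fintype.card γ * Nat.card {f : β → γ // Surjective f}
        + Fintype.card γ * Nat.card {f : β → Fin (Fintype.card γ - 1) // Surjective f} := by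
  classical
  -- step 1 : split off the value at `none`
  have e1 : {f : Option β → γ // Surjective f}
      ≃ Σ v : γ, {g : β → γ // ∀ y, y = v ∨ ∃ x, g x = y} := by
    refine ⟨fun f => ⟨f.1 none, fun x => f.1 (some x), ?_⟩,
            fun vg => ⟨fun o => o.elim vg.1 vg.2.1, ?_⟩, ?_, ?_⟩
    · intro y
      obtain ⟨x, hx⟩ := f.2 y
      cases x with
      | none => exact Or.inl hx.symm
      | some x => exact Or.inr ⟨x, hx⟩
    · intro y
      rcases vg.2.2 y with h | ⟨x, hx⟩
      · exact ⟨none, h.symm⟩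
      · exact ⟨some x, hx⟩
    · rintro ⟨f, hf⟩
      ext o; cases o <;> rfl
    · rintro ⟨v, g, hg⟩
      rfl
  rw [Nat.card_congr e1]
  have e2 : ∀ v : γ, {g : β → γ // ∀ y, y = v ∨ ∃ x, g x = y}
      ≃ {g : β → γ // Surjective g} ⊕ {g : β → γ // (∀ y, y = v ∨ ∃ x, g x = y) ∧ ¬∃ x, g x = v} := by
    intro v
    refine (Equiv.subtypeEquivRight ?_).trans (subtypeOrEquiv _ _ ?_)
    · intro g
      constructor
      · intro h
        by_cases hv : ∃ x, g x = v
        · left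
          intro y
          rcases h y with rfl | hy
          · exact hv
          · exact hy
        · exact Or.inr ⟨h, hv⟩
      · rintro (h | ⟨h, _⟩)
        · exact fun y => Or.inr (h y)
        · exact h
    · intro r hrp hrq g hg
      obtain ⟨_, hv⟩ := hrq g hg
      exact absurd ((hrp g hg) v) hv
  have e3 : ∀ v : γ, {g : β → γ // (∀ y, y = v ∨ ∃ x, g x = y) ∧ ¬∃ x, g x = v}
      ≃ {h : β → {y : γ // y ≠ v} // Surjective h} := by
    intro v
    refine ⟨fun g => ⟨fun x => ⟨g.1 x, fun hx => g.2.2 ⟨x, hx⟩⟩, ?_⟩,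
            fun h => ⟨fun x => (h.1 x).1, ?_, ?_⟩, ?_, ?_⟩
    · rintro ⟨y, hy⟩
      rcases g.2.1 y with rfl | ⟨x, hx⟩
      · exact absurd rfl hy
      · exact ⟨x, Subtype.ext hx⟩
    · intro y
      by_cases hy : y = v
      · exact Or.inl hy
      · obtain ⟨x, hx⟩ := h.2 ⟨y, hy⟩
        exact Or.inr ⟨x, congrArg Subtype.val hx⟩
    · rintro ⟨x, hx⟩
      exact (h.1 x).2 hx
    · rintro ⟨g, hg⟩; rfl
    · rintro ⟨h, hh⟩
      ext x
      rfl
  have hcardne : ∀ v : γ, Nat.card {h : β → {y : γ // y ≠ v} // Surjective h}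
      = Nat.card {f : β → Fin (Fintype.card γ - 1) // Surjective f} := by
    intro v
    refine card_surj_congr (Equiv.refl β) (Fintype.equivFinOfCardEq ?_)
    have : Fintype.card {y : γ // y = v} = 1 := Fintype.card_subtype_eq v
    have h2 := Fintype.card_subtype_compl (fun y : γ => y = v)
    rw [this] at h2
    exact h2
  haveI : ∀ v : γ, Fintype {g : β → γ // ∀ y, y = v ∨ ∃ x, g x = y} := fun v =>
    Fintype.ofFinite _
  rw [Nat.card_eq_fintype_card, Fintype.card_sigma]
  have : ∀ v : γ, Fintype.card {g : β → γ // ∀ y, y = v ∨ ∃ x, g x = y}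
      = Nat.card {f : β → γ // Surjective f}
        + Nat.card {f : β → Fin (Fintype.card γ - 1) // Surjective f} := by
    intro v
    rw [← Nat.card_eq_fintype_card, Nat.card_congr (e2 v), Nat.card_sum,
      Nat.card_congr (e3 v), hcardne v]
  rw [Finset.sum_congr rfl fun v _ => this v, Finset.sum_const, Finset.card_univ, smul_eq_mul,
    Nat.mul_add]

lemma card_surj_eq (n k : ℕ) :
    Nat.card {f : Fin n → Fin k // Surjective f} = k.factorial * stirling' n k := by
  induction n generalizing k with
  | zero =>
    cases k with
    | zero =>
      haveI : Unique {f : Fin 0 → Fin 0 // Surjective f} :=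
        ⟨⟨⟨finZeroElim, fun y => y.elim0⟩⟩, by rintro ⟨f, hf⟩; ext x; exact x.elim0⟩
      simp [Nat.card_unique, stirling']
    | succ k =>
      haveI : IsEmpty {f : Fin 0 → Fin (k+1) // Surjective f} := by
        constructor
        rintro ⟨f, hf⟩
        obtain ⟨x, -⟩ := hf 0
        exact x.elim0
      simp [Nat.card_of_isEmpty, stirling']
  | succ n ih =>
    rw [card_surj_congr (finSuccEquiv n) (Equiv.refl (Fin k)), card_surj_option]
    simp only [Fintype.card_fin, ih]
    cases k with
    | zero => simp [stirling']
    | succ k =>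
      show (k+1) * ((k+1).factorial * stirling' n (k+1))
          + (k+1) * ((k+1-1).factorial * stirling' n (k+1-1))
          = (k+1).factorial * stirling' (n+1) (k+1)
      have : stirling' (n+1) (k+1) = stirling' n k + (k + 1) * stirling' n (k + 1) := rfl
      rw [this]
      simp [Nat.factorial_succ]
      ring


open Finset Function

variable {α : Type*} [Fintype α] [DecidableEq α]

instance : Finite (Finpartition (univ : Finset α)) :=
  Finite.of_injective Finpartition.parts (by rintro ⟨⟩ ⟨⟩ h; simpa using h)

lemma Finpartition.parts_eq_image (P : Finpartition (univ : Finset α)) :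
    P.parts = univ.image (fun x => P.part x) := by
  ext b
  simp only [mem_image, mem_univ, true_and]
  constructor
  · intro hb
    obtain ⟨x, hx⟩ := P.nonempty_of_mem_parts hb
    exact ⟨x, P.part_eq_of_mem hb hx⟩
  · rintro ⟨x, rfl⟩
    exact P.part_mem.2 (mem_univ x)

/-- The fiber partition of a surjective map. -/
def fiberPartition {k : ℕ} (f : α → Fin k) (hf : Surjective f) :
    Finpartition (univ : Finset α) where
  parts := (univ : Finset (Fin k)).image fun j => univ.filter fun x => f x = j
  supIndep := by
    rw [Finset.supIndep_iff_pairwiseDisjoint]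
    rintro b hb c hc hbc
    simp only [coe_image, Set.mem_image, mem_coe, mem_univ, true_and] at hb hc
    obtain ⟨j, -, rfl⟩ := hb
    obtain ⟨j', -, rfl⟩ := hc
    refine Finset.disjoint_left.mpr fun x hx hx' => hbc ?_
    simp only [id_eq, mem_filter, mem_univ, true_and] at hx hx'
    rw [← hx, ← hx']
  sup_parts := by
    ext x
    simp only [mem_sup, mem_image, mem_univ, true_and, iff_true]
    exact ⟨univ.filter fun y => f y = f x, ⟨f x, rfl⟩, by simp⟩
  bot_notMem := by
    simp only [bot_eq_empty, mem_image, mem_univ, true_and, not_exists]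
    intro j h
    obtain ⟨x, hx⟩ := hf j
    have : x ∈ univ.filter fun y => f y = j := by simp [hx]
    rw [h] at this
    exact absurd this (notMem_empty x)

lemma fiber_mem_parts {k : ℕ} (f : α → Fin k) (hf : Surjective f) (j : Fin k) :
    (univ.filter fun x => f x = j) ∈ (fiberPartition f hf).parts :=
  mem_image_of_mem _ (mem_univ j)

lemma part_fiberPartition {k : ℕ} (f : α → Fin k) (hf : Surjective f) (x : α) :
    (fiberPartition f hf).part x = univ.filter fun y => f y = f x :=
  (fiberPartition f hf).part_eq_of_mem (fiber_mem_parts f hf (f x)) (by simp)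

lemma fiber_injective {k : ℕ} (f : α → Fin k) (hf : Surjective f) :
    Injective fun j : Fin k => univ.filter fun x => f x = j := by
  intro j j' h
  dsimp only at h
  obtain ⟨x, hx⟩ := hf j
  have h1 : x ∈ univ.filter fun x => f x = j := by simp [hx]
  rw [h] at h1
  simp only [mem_filter] at h1
  rw [← hx, h1.2]

lemma card_parts_fiberPartition {k : ℕ} (f : α → Fin k) (hf : Surjective f) :
    (fiberPartition f hf).parts.card = k := by
  show ((univ : Finset (Fin k)).image fun j => univ.filter fun x => f x = j).card = k
  rw [Finset.card_image_of_injective _ (fiber_injective f hf), card_univ, Fintype.card_fin]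

lemma card_surj_eq_partitions (k : ℕ) :
    Nat.card {f : α → Fin k // Surjective f}
      = k.factorial
        * Nat.card {P : Finpartition (univ : Finset α) // P.parts.card = k} := by
  classical
  set Φ : (Σ P : {P : Finpartition (univ : Finset α) // P.parts.card = k},
        (Fin k ≃ {b // b ∈ P.1.parts})) → {f : α → Fin k // Surjective f} :=
    fun Pe => ⟨fun x => Pe.2.symm ⟨Pe.1.1.part x, Pe.1.1.part_mem.2 (mem_univ x)⟩, by
      intro j
      obtain ⟨x, hx⟩ := Pe.1.1.nonempty_of_mem_parts (Pe.2 j).2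
      refine ⟨x, ?_⟩
      have hpart : Pe.1.1.part x = (Pe.2 j).1 :=
        Pe.1.1.part_eq_of_mem (Pe.2 j).2 hx
      have h5 : (⟨Pe.1.1.part x, Pe.1.1.part_mem.2 (mem_univ x)⟩ :
          {b // b ∈ Pe.1.1.parts}) = Pe.2 j := Subtype.ext hpart
      dsimp only
      rw [h5, Equiv.symm_apply_apply]⟩ with hΦ
  have hbij : Bijective Φ := by
    constructor
    · rintro ⟨⟨P, hP⟩, e⟩ ⟨⟨P', hP'⟩, e'⟩ h
      have hfun : ∀ x, (e.symm ⟨P.part x, P.part_mem.2 (mem_univ x)⟩ : Fin k)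
          = e'.symm ⟨P'.part x, P'.part_mem.2 (mem_univ x)⟩ := fun x =>
        congrFun (congrArg Subtype.val h) x
      have hpart : ∀ x, P.part x = P'.part x := by
        intro x
        ext y
        rw [P.mem_part_iff_part_eq_part (mem_univ y) (mem_univ x),
          P'.mem_part_iff_part_eq_part (mem_univ y) (mem_univ x)]
        constructor
        · intro hxy
          have h1 : (e'.symm ⟨P'.part y, P'.part_mem.2 (mem_univ y)⟩ : Fin k)
              = e'.symm ⟨P'.part x, P'.part_mem.2 (mem_univ x)⟩ := by
            rw [← hfun y, ← hfun x]
            exact congrArg e.symm (Subtype.ext hxy)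
          exact Subtype.ext_iff.mp (e'.symm.injective h1)
        · intro hxy
          have h1 : (e.symm ⟨P.part y, P.part_mem.2 (mem_univ y)⟩ : Fin k)
              = e.symm ⟨P.part x, P.part_mem.2 (mem_univ x)⟩ := by
            rw [hfun y, hfun x]
            exact congrArg e'.symm (Subtype.ext hxy)
          exact Subtype.ext_iff.mp (e.symm.injective h1)
      have hPP' : P = P' := by
        apply Finpartition.ext
        rw [P.parts_eq_image, P'.parts_eq_image]
        exact Finset.image_congr fun x _ => hpart x
      subst hPP'
      obtain rfl := Subsingleton.elim hP' hP
      suffices hee : e = e' by rw [hee]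
      ext j
      obtain ⟨x, hx⟩ := P.nonempty_of_mem_parts (e j).2
      have h1 : (⟨P.part x, P.part_mem.2 (mem_univ x)⟩ : {b // b ∈ P.parts}) = e j :=
        Subtype.ext (P.part_eq_of_mem (e j).2 hx)
      have h4 : (e.symm ⟨P.part x, P.part_mem.2 (mem_univ x)⟩ : Fin k) = j := by
        rw [h1]; exact e.symm_apply_apply j
      have h2 := hfun x
      rw [h4] at h2
      have h6 : e' j = ⟨P.part x, P.part_mem.2 (mem_univ x)⟩ := by
        have := congrArg e' h2
        rw [Equiv.apply_symm_apply] at this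
        exact this
      rw [h6, ← h1]
    · rintro ⟨f, hf⟩
      set g : Fin k → {b // b ∈ (fiberPartition f hf).parts} :=
        fun j => ⟨univ.filter fun x => f x = j, fiber_mem_parts f hf j⟩ with hg
      have hgbij : Bijective g := by
        constructor
        · intro j j' h
          exact fiber_injective f hf (Subtype.ext_iff.mp h)
        · rintro ⟨b, hb⟩
          obtain ⟨j, -, rfl⟩ := Finset.mem_image.mp hb
          exact ⟨j, rfl⟩
      refine ⟨⟨⟨fiberPartition f hf, card_parts_fiberPartition f hf⟩,
        Equiv.ofBijective g hgbij⟩, ?_⟩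
      apply Subtype.ext
      funext x
      simp only [hΦ]
      have h7 : (⟨(fiberPartition f hf).part x, (fiberPartition f hf).part_mem.2 (mem_univ x)⟩ :
          {b // b ∈ (fiberPartition f hf).parts}) = Equiv.ofBijective g hgbij (f x) :=
        Subtype.ext (part_fiberPartition f hf x)
      rw [h7, Equiv.symm_apply_apply]
  rw [← Nat.card_eq_of_bijective Φ hbij]
  haveI : Fintype {P : Finpartition (univ : Finset α) // P.parts.card = k} :=
    Fintype.ofFinite _
  rw [Nat.card_eq_fintype_card, Fintype.card_sigma, Nat.card_eq_fintype_card]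
  rw [Finset.sum_congr rfl (fun P _ => ?_), Finset.sum_const, card_univ, smul_eq_mul, mul_comm]
  rw [Fintype.card_equiv (Fintype.equivOfCardEq (by simp [P.2]))]
  simp

section Count

variable {α : Type*} [Fintype α] [DecidableEq α]

lemma card_partitions {α : Type} [Fintype α] [DecidableEq α] (k : ℕ) :
    Nat.card {P : Finpartition (univ : Finset α) // P.parts.card = k}
      = stirling' (Fintype.card α) k := by
  have h1 := card_surj_eq_partitions (α := α) k
  rw [card_surj_congr (Fintype.equivFin α) (Equiv.refl (Fin k)), card_surj_eq] at h1
  exact (Nat.eq_of_mul_eq_mul_left k.factorial_pos h1.symm)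

lemma part_card_le {α : Type} [Fintype α] [DecidableEq α]
    (P : Finpartition (univ : Finset α)) {b : Finset α} (hb : b ∈ P.parts) :
    b.card + (P.parts.card - 1) ≤ Fintype.card α := by
  have hsum := P.sum_card_parts
  rw [card_univ] at hsum
  have h1 : ∑ c ∈ P.parts.erase b, c.card + b.card = Fintype.card α := by
    rw [Finset.sum_erase_add _ _ hb, hsum]
  have h2 : P.parts.card - 1 ≤ ∑ c ∈ P.parts.erase b, c.card := by
    rw [← Finset.card_erase_of_mem hb]
    calc (P.parts.erase b).card = ∑ _c ∈ P.parts.erase b, 1 := by simp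
    _ ≤ ∑ c ∈ P.parts.erase b, c.card := Finset.sum_le_sum fun c hc =>
        Finset.card_pos.mpr (P.nonempty_of_mem_parts (Finset.mem_of_mem_erase hc))
  omega

lemma stirlingRes_eq (n k r : ℕ) (h : n + 1 ≤ k + r) :
    stirlingRes n k r = stirling' n k := by
  rw [stirlingRes]
  rw [Nat.card_congr (Equiv.subtypeEquivRight (q := fun P :
      Finpartition (Finset.univ : Finset (Fin n)) => P.parts.card = k) fun P => ?_)]
  · rw [card_partitions, Fintype.card_fin]
  · constructor
    · exact fun hP => hP.1
    · intro hP
      refine ⟨hP, fun b hb => ?_⟩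
      have := part_card_le P hb
      rw [hP, Fintype.card_fin] at this
      have hk : 1 ≤ k := by
        rw [← hP]
        exact Finset.card_pos.mpr ⟨b, hb⟩
      omega


open Finset

section FactMod

variable {p : ℕ}

lemma mulp_cast (p : ℕ) (x y : ℕ) (h : (x : ZMod p) = y) :
    ((p * x : ℕ) : ZMod (p^2)) = ((p * y : ℕ) : ZMod (p^2)) := by
  rw [ZMod.natCast_eq_natCast_iff] at h ⊢
  simpa [pow_two] using Nat.ModEq.mul_left' p h

lemma ascFactorial_cast (p r : ℕ) : (((p+1).ascFactorial r : ℕ) : ZMod p) = (r.factorial : ZMod p) := by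
  induction r with
  | zero => simp
  | succ r ih =>
    rw [Nat.ascFactorial_succ, Nat.factorial_succ]
    push_cast [ZMod.natCast_self, ih]
    ring

lemma fact_padd (hp : p.Prime) (r : ℕ) :
    (((p + r).factorial : ℕ) : ZMod (p^2))
      = -(p : ZMod (p^2)) * (r.factorial : ZMod (p^2)) := by
  haveI : Fact p.Prime := ⟨hp⟩
  have h1 : (p + r).factorial = p * ((p-1).factorial * (p+1).ascFactorial r) := by
    rw [← Nat.factorial_mul_ascFactorial p r]
    have hpos := hp.pos
    obtain ⟨q, rfl⟩ : ∃ q, p = q + 1 := ⟨p - 1, by omega⟩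
    rw [Nat.factorial_succ]
    simp only [Nat.add_sub_cancel]
    ring
  have h2 : (((p-1).factorial * (p+1).ascFactorial r : ℕ) : ZMod p)
      = ((r.factorial * (p-1) : ℕ) : ZMod p) := by
    push_cast
    rw [ZMod.wilsons_lemma, ascFactorial_cast]
    have : ((p - 1 : ℕ) : ZMod p) = -1 := by
      rw [Nat.cast_sub hp.one_le, ZMod.natCast_self]
      ring
    rw [this]
    ring
  rw [h1, mulp_cast p _ _ h2]
  push_cast
  have : ((p - 1 : ℕ) : ZMod (p^2)) = (p : ZMod (p^2)) - 1 := by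
    rw [Nat.cast_sub hp.one_le]
    push_cast
    ring
  rw [this]
  have hp2 : ((p : ZMod (p^2)))^2 = 0 := by
    have := ZMod.natCast_self (p^2)
    push_cast at this
    exact this
  linear_combination ((r.factorial : ZMod (p^2))) * hp2

end FactMod

set_option maxHeartbeats 1000000 in
theorem stmt_15 (p i : ℕ) (hp : p.Prime) (hp3 : 3 ≤ p) (h1 : 1 ≤ i) (h2 : i ≤ p - 1) :
    ∑ m ∈ Finset.Icc (p + 1) (i + p),
        (-1 : ℤ) ^ (m - 1) * (Nat.factorial (m - 1) : ℤ) * stirlingRes (i + p) m (p - 1) ≡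
      (if i = 1 then (p : ℤ) else 0) [ZMOD (p : ℤ) ^ 2] := by
  haveI : Fact p.Prime := ⟨hp⟩
  have hmod : ((p : ℤ)^2) = ((p^2 : ℕ) : ℤ) := by push_cast; ring
  rw [hmod]
  rw [← ZMod.intCast_eq_intCast_iff]
  push_cast
  -- from here, we work in `ZMod (p^2)`
  have hodd : Odd p := hp.odd_of_ne_two (by omega)
  have hterm : ∀ m ∈ Icc (p+1) (i+p),
      ((-1 : ZMod (p^2)) ^ (m - 1) * ((m-1).factorial : ZMod (p^2))
          * (stirlingRes (i + p) m (p - 1) : ZMod (p^2)))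
        = (p : ZMod (p^2)) * ((-1 : ZMod (p^2)) ^ (m - p - 1)
            * ((m - p - 1).factorial : ZMod (p^2)) * (stirling' i (m - p) : ZMod (p^2))) := by
    intro m hm
    rw [Finset.mem_Icc] at hm
    rw [stirlingRes_eq _ _ _ (by omega)]
    have hfact : (((m - 1).factorial : ℕ) : ZMod (p^2))
        = -(p : ZMod (p^2)) * (((m - p - 1).factorial : ℕ) : ZMod (p^2)) := by
      rw [show m - 1 = p + (m - p - 1) from by omega]
      exact fact_padd hp (m - p - 1)
    have hS : (stirling' (i + p) m : ZMod p) = (stirling' i (m - p) : ZMod p) := by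
      rw [stirling'_shift hp (by omega) i m, if_pos (by omega),
        stirling'_eq_zero_of_lt (show i + 1 < m from by omega)]
      simp
    have hmul : (p : ZMod (p^2)) * (stirling' (i + p) m : ZMod (p^2))
        = (p : ZMod (p^2)) * (stirling' i (m - p) : ZMod (p^2)) := by
      have := mulp_cast p _ _ hS
      push_cast at this
      exact this
    have hsign : (-1 : ZMod (p^2)) ^ (m - 1) * (-1) = (-1 : ZMod (p^2)) ^ (m - p - 1) := by
      rw [show m - 1 = (m - p - 1) + p from by omega, pow_add, Odd.neg_one_pow hodd]
      ring
    calc (-1 : ZMod (p^2)) ^ (m - 1) * ((m-1).factorial : ZMod (p^2))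
          * (stirling' (i + p) m : ZMod (p^2))
        = (-1 : ZMod (p^2)) ^ (m - 1) * (-1) * ((m - p - 1).factorial : ZMod (p^2))
            * ((p : ZMod (p^2)) * (stirling' (i + p) m : ZMod (p^2))) := by
          rw [hfact]; ring
      _ = (-1 : ZMod (p^2)) ^ (m - 1) * (-1) * ((m - p - 1).factorial : ZMod (p^2))
            * ((p : ZMod (p^2)) * (stirling' i (m - p) : ZMod (p^2))) := by rw [hmul]
      _ = (p : ZMod (p^2)) * ((-1 : ZMod (p^2)) ^ (m - p - 1)
            * ((m - p - 1).factorial : ZMod (p^2)) * (stirling' i (m - p) : ZMod (p^2))) := by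
          rw [hsign]; ring
  rw [Finset.sum_congr rfl hterm, ← Finset.mul_sum]
  have hreindex : ∑ m ∈ Icc (p+1) (i+p), ((-1 : ZMod (p^2)) ^ (m - p - 1)
        * ((m - p - 1).factorial : ZMod (p^2)) * (stirling' i (m - p) : ZMod (p^2)))
      = ∑ m' ∈ Icc 1 i, ((-1 : ZMod (p^2)) ^ (m' - 1)
        * ((m' - 1).factorial : ZMod (p^2)) * (stirling' i m' : ZMod (p^2))) := by
    rw [show Icc (p+1) (i+p) = Icc (p+1) (p+i) from by rw [add_comm i p],
      ← map_add_left_Icc 1 i p, Finset.sum_map]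
    apply Finset.sum_congr rfl
    intro m' _
    simp only [addLeftEmbedding_apply]
    simp only [show p + m' - p = m' from by omega, show p + m' - p - 1 = m' - 1 from by omega]
  rw [hreindex]
  have hkey := congrArg (fun z : ℤ => (z : ZMod (p^2))) (key_identity i h1)
  push_cast at hkey
  rw [hkey]
  by_cases hi : i = 1 <;> simp [hi]
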